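/- arXiv:1611.03707 — 2 statements merged into one kernel-verified Lean document; each statement's English description precedes it below -/
import Mathlib

section
/- Let n ≥ 1 and let 𝔄 = (A_1,…,A_k) be an ordered partition of {1,…,n} into k nonempty blocks. The number of rook words of length n that are of type 𝔄 equals binom(n, k−1). -/
open Finset

noncomputable section
open scoped Classical

/-- `a : Fin n → Fin n` encodes a word `(a_1,…,a_n) ∈ {1,…,n}^n` via `a_i = (a i) + 1`
(i.e. the `Fin n` value is the 1-based letter minus one). -/
def IsParkingFunction {n : ℕ} (a : Fin n → Fin n) : Prop :=
  ∀ i : Fin n, (i : ℕ) + 1 ≤ (Finset.univ.filter (fun j => a j ≤ i)).card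

/-- `X = {x_1 < … < x_ℓ}` is centered for `a` iff `a_{x_i} ≤ i` for all `i`, i.e. the 1-based
value at `x` is at most the rank of `x` in `X`. -/
def Centered {n : ℕ} (a : Fin n → Fin n) (X : Finset (Fin n)) : Prop :=
  ∀ x ∈ X, (a x : ℕ) + 1 ≤ (X.filter (fun y => y ≤ x)).card

/-- `z(a)`: the maximum cardinality of a centered set for `a`. -/
def zOf {n : ℕ} (a : Fin n → Fin n) : ℕ :=
  sSup {k : ℕ | ∃ X : Finset (Fin n), Centered a X ∧ X.card = k}

/-- `run(a)`: the largest `i` such that all 1-based values `1,…,i` occur in `a` (0 if none). -/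
def runOf {n : ℕ} (a : Fin n → Fin n) : ℕ :=
  ((Finset.range n).filter (fun i => ∀ j ≤ i, ∃ x : Fin n, (a x : ℕ) = j)).card

/-- `Run(a)`: the set of positions `j` that are the last occurrence of some 1-based value
`≤ run(a)`. -/
def RunSet {n : ℕ} (a : Fin n → Fin n) : Finset (Fin n) :=
  Finset.univ.filter (fun j => (a j : ℕ) < runOf a ∧ ∀ j' : Fin n, j < j' → a j' ≠ a j)

/-- A rook word: the first letter is at most `run(a)`. -/
def IsRookWord {n : ℕ} (a : Fin n → Fin n) : Prop :=
  ∃ h : 0 < n, (a ⟨0, h⟩ : ℕ) + 1 ≤ runOf a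

/-- `LegEq T k` : depth-first search from `0`, always preferring the largest unvisited neighbour,
visits exactly `k` non-root vertices before the first backtracking. -/
def LegEq {n : ℕ} (T : SimpleGraph (Fin (n + 1))) (k : ℕ) : Prop :=
  ∃ v : Fin (k + 1) → Fin (n + 1),
    v 0 = 0 ∧
    (∀ i : Fin k,
      T.Adj (v i.castSucc) (v i.succ) ∧
      (∀ j : Fin (k + 1), j ≤ i.castSucc → v i.succ ≠ v j) ∧
      (∀ w : Fin (n + 1), T.Adj (v i.castSucc) w →
        (∀ j : Fin (k + 1), j ≤ i.castSucc → w ≠ v j) → w ≤ v i.succ)) ∧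
    (∀ w : Fin (n + 1), T.Adj (v (Fin.last k)) w → ∃ j : Fin (k + 1), w = v j)

/-- `Nbr [ℓ_1,…,ℓ_m]` is the number of tuples `(x_0,…,x_m)` with `x_0 = 0` and
`x_{i-1} < x_i ≤ ℓ_1 + ⋯ + ℓ_i` for all `i`. -/
def Nbr (L : List ℤ) : ℕ :=
  Nat.card {x : Fin (L.length + 1) → ℤ //
    x 0 = 0 ∧ ∀ i : Fin L.length,
      x i.castSucc < x i.succ ∧ x i.succ ≤ (L.take ((i : ℕ) + 1)).sum}

/-- The cyclic sum `s(ℓ)` of the paper (indices of `ℓ` read modulo `k`). -/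
def cycS (k r : ℕ) (t : ℤ) (ℓ : ℕ → ℕ) : ℕ :=
  ∑ i ∈ Finset.range k,
    Nbr (((∑ j ∈ Finset.range r, (ℓ ((i + j + 1) % k) : ℤ)) + t) ::
      List.ofFn (fun p : Fin (k - r - 1) => (ℓ ((i + r + 1 + (p : ℕ)) % k) : ℤ)))

/-- `B` is the coimage of `a`: the ordered partition of positions into fibers of `a`,
ordered by increasing value. -/
def IsCoimage {n k : ℕ} (a : Fin n → Fin n) (B : Fin k → Finset (Fin n)) : Prop :=
  (∀ j, (B j).Nonempty) ∧
  (∀ x : Fin n, ∃ j, x ∈ B j) ∧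
  (∀ j j' : Fin k, ∀ x ∈ B j, ∀ y ∈ B j', (a x = a y ↔ j = j')) ∧
  (∀ j j' : Fin k, ∀ x ∈ B j, ∀ y ∈ B j', j < j' → a x < a y)

/-- `a` is of type `𝔄` iff its coimage is a cyclic rotation of `𝔄`. -/
def IsOfType {n k : ℕ} (a : Fin n → Fin n) (A : Fin k → Finset (Fin n)) : Prop :=
  ∃ s : ℕ, s < k ∧ IsCoimage a (fun j => A ⟨((j : ℕ) + s) % k, Nat.mod_lt _ j.pos⟩)

/- ========================= auxiliary lemmas ========================= -/

private lemma mod_helper1 {k j s : ℕ} (hj : j < k) (hs : s < k) :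
    ((j + s) % k + k - s) % k = j := by
  have h1 : ((j + s) % k + (k - s)) % k = ((j + s) + (k - s)) % k :=
    (Nat.mod_modEq (j + s) k).add_right _
  have e1 : (j + s) % k + k - s = (j + s) % k + (k - s) := by omega
  have e2 : j + s + (k - s) = j + k := by omega
  rw [e1, h1, e2, Nat.add_mod_right, Nat.mod_eq_of_lt hj]

private lemma mod_helper2 {k t r : ℕ} (ht : t < k) (hr : r < k) :
    (t + k - (t + k - r) % k) % k = r := by
  set u := (t + k - r) % k with hu
  have hul : u < k := Nat.mod_lt _ (by omega)
  have h1 : u ≡ t + k - r [MOD k] := Nat.mod_modEq _ _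
  have h2 : r + u ≡ t + k [MOD k] := by
    have h3 := h1.add_left r
    have e : r + (t + k - r) = t + k := by omega
    rwa [e] at h3
  have h4 : t + k - u + u ≡ r + u [MOD k] := by
    have e : t + k - u + u = t + k := by omega
    rw [e]; exact h2.symm
  have h5 : t + k - u ≡ r [MOD k] := Nat.ModEq.add_right_cancel' u h4
  rwa [Nat.ModEq, Nat.mod_eq_of_lt hr] at h5

private lemma mod_helper3 {k t s : ℕ} (ht : t < k) (hs : s < k) :
    ((t + k - s) % k + s) % k = t := by
  have h1 : ((t + k - s) % k + s) % k = ((t + k - s) + s) % k :=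
    (Nat.mod_modEq (t + k - s) k).add_right _
  have e : t + k - s + s = t + k := by omega
  rw [h1, e, Nat.add_mod_right, Nat.mod_eq_of_lt ht]

private lemma orderEmb_ge {n k : ℕ} (X : Finset (Fin n)) (h : X.card = k) :
    ∀ (i : ℕ) (hik : i < k), i ≤ (X.orderEmbOfFin h ⟨i, hik⟩ : ℕ) := by
  intro i
  induction i with
  | zero => intro _; exact Nat.zero_le _
  | succ i ih =>
    intro hik
    have hik' : i < k := Nat.lt_of_succ_lt hik
    have h1 : (X.orderEmbOfFin h ⟨i, hik'⟩ : ℕ) < (X.orderEmbOfFin h ⟨i + 1, hik⟩ : ℕ) := by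
      have := (X.orderEmbOfFin h).strictMono
        (show (⟨i, hik'⟩ : Fin k) < ⟨i + 1, hik⟩ from by simp [Fin.lt_def])
      exact this
    have := ih hik'
    omega

private lemma orderEmb_prefix {n k : ℕ} (X : Finset (Fin n)) (h : X.card = k)
    (m : ℕ) (hsub : ∀ v : Fin n, (v : ℕ) ≤ m → v ∈ X) :
    ∀ (i : ℕ) (hik : i < k), i ≤ m → (X.orderEmbOfFin h ⟨i, hik⟩ : ℕ) = i := by
  have hkn : k ≤ n := by
    have := Finset.card_le_univ X
    simpa [h] using this
  intro i
  induction i using Nat.strong_induction_on with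
  | _ i ih =>
    intro hik him
    have hin : i < n := lt_of_lt_of_le hik hkn
    have hvi : (⟨i, hin⟩ : Fin n) ∈ X := hsub _ (by simpa using him)
    have hrange : Set.range (X.orderEmbOfFin h) = ↑X := Finset.range_orderEmbOfFin X h
    have : (⟨i, hin⟩ : Fin n) ∈ Set.range (X.orderEmbOfFin h) := by rw [hrange]; exact hvi
    obtain ⟨j, hj⟩ := this
    have hge := orderEmb_ge X h i hik
    rcases lt_or_ge (j : ℕ) i with hlt | hgej
    · exfalso
      have h2 : (X.orderEmbOfFin h j : ℕ) = (j : ℕ) := by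
        simpa using ih j hlt j.isLt (le_trans (le_of_lt hlt) him)
      have h3 : (X.orderEmbOfFin h j : ℕ) = i := by rw [hj]
      omega
    · have hle : (⟨i, hik⟩ : Fin k) ≤ j := hgej
      have hv : (X.orderEmbOfFin h ⟨i, hik⟩ : ℕ) ≤ (X.orderEmbOfFin h j : ℕ) :=
        (X.orderEmbOfFin h).monotone hle
      rw [hj] at hv
      simp at hv
      omega

private lemma downclosed_eq_range (S : Finset ℕ)
    (hdc : ∀ i ∈ S, ∀ j ≤ i, j ∈ S) : S = Finset.range S.card := by
  have hsub : S ⊆ Finset.range S.card := by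
    intro i hi
    rw [Finset.mem_range]
    have h1 : Finset.range (i + 1) ⊆ S := by
      intro j hj
      exact hdc i hi j (by simpa [Nat.lt_succ_iff] using hj)
    have := Finset.card_le_card h1
    simpa using this
  exact Finset.eq_of_subset_of_card_le hsub (by simp)

private lemma lt_runOf_iff {n : ℕ} (a : Fin n → Fin n) (i : ℕ) :
    i < runOf a ↔ i < n ∧ ∀ j ≤ i, ∃ x : Fin n, (a x : ℕ) = j := by
  set S := (Finset.range n).filter (fun i => ∀ j ≤ i, ∃ x : Fin n, (a x : ℕ) = j) with hS
  have hdc : ∀ i ∈ S, ∀ j ≤ i, j ∈ S := by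
    intro i hi j hj
    rw [hS, Finset.mem_filter, Finset.mem_range] at hi ⊢
    exact ⟨lt_of_le_of_lt hj hi.1, fun j' hj' => hi.2 j' (le_trans hj' hj)⟩
  have hre : S = Finset.range (runOf a) := downclosed_eq_range S hdc
  constructor
  · intro h
    have : i ∈ S := by rw [hre, Finset.mem_range]; exact h
    rw [hS, Finset.mem_filter, Finset.mem_range] at this
    exact this
  · intro h
    have : i ∈ S := by rw [hS, Finset.mem_filter, Finset.mem_range]; exact h
    rw [hre, Finset.mem_range] at this
    exact this

private lemma card_val_le {n : ℕ} (t : ℕ) (ht : t < n) :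
    (Finset.univ.filter (fun i : Fin n => (i : ℕ) ≤ t)).card = t + 1 := by
  have h : Finset.univ.filter (fun i : Fin n => (i : ℕ) ≤ t) = Finset.Iic (⟨t, ht⟩ : Fin n) := by
    ext x
    simp [Finset.mem_Iic, Fin.le_def]
  rw [h, Fin.card_Iic]

private lemma sum_choose_aux : ∀ (m t : ℕ),
    ∑ j ∈ Finset.range m, (t + j).choose t = (t + m).choose (t + 1) := by
  intro m
  induction m with
  | zero => intro t; simp [Nat.choose_eq_zero_of_lt]
  | succ m ih =>
    intro t
    rw [Finset.sum_range_succ, ih t]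
    have e : t + (m + 1) = (t + m) + 1 := by omega
    rw [e, Nat.choose_succ_succ' (t + m) t]
    omega

private lemma sum_main {n k : ℕ} (hk : 1 ≤ k) (hkn : k ≤ n) :
    ∑ r ∈ Finset.range k, (n - (r + 1)).choose (k - (r + 1)) = n.choose (k - 1) := by
  have h1 := Finset.sum_range_reflect (fun r => (n - (r + 1)).choose (k - (r + 1))) k
  rw [← h1]
  have h2 : ∀ j ∈ Finset.range k, (n - (k - 1 - j + 1)).choose (k - (k - 1 - j + 1))
      = ((n - k) + j).choose (n - k) := by
    intro j hj
    rw [Finset.mem_range] at hj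
    have e1 : n - (k - 1 - j + 1) = (n - k) + j := by omega
    have e2 : k - (k - 1 - j + 1) = j := by omega
    rw [e1, e2]
    have h3 := Nat.choose_symm (show j ≤ (n - k) + j by omega)
    have e3 : (n - k) + j - j = n - k := by omega
    rw [e3] at h3
    exact h3.symm
  rw [Finset.sum_congr rfl h2, sum_choose_aux k (n - k)]
  have e4 : n - k + k = n := by omega
  rw [e4]
  have h5 := Nat.choose_symm (show n - k + 1 ≤ n by omega)
  have e5 : n - (n - k + 1) = k - 1 := by omega
  rw [e5] at h5
  exact h5.symm

/- ========================= the word construction ========================= -/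

section Core

variable {n k : ℕ} (A : Fin k → Finset (Fin n))

private def jdx (hcov : ∀ x : Fin n, ∃! j, x ∈ A j) (x : Fin n) : Fin k :=
  (hcov x).choose

private lemma jdx_mem (hcov : ∀ x : Fin n, ∃! j, x ∈ A j) (x : Fin n) :
    x ∈ A (jdx A hcov x) := (hcov x).choose_spec.1

private lemma jdx_eq (hcov : ∀ x : Fin n, ∃! j, x ∈ A j) {x : Fin n} {j : Fin k}
    (hx : x ∈ A j) : jdx A hcov x = j :=
  ((hcov x).choose_spec.2 j hx).symm

private def mkWord (hcov : ∀ x : Fin n, ∃! j, x ∈ A j) (hk : 0 < k)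
    (X : Finset (Fin n)) (hX : X.card = k) (s : ℕ) : Fin n → Fin n :=
  fun p => X.orderEmbOfFin hX ⟨((jdx A hcov p : ℕ) + k - s % k) % k, Nat.mod_lt _ hk⟩

private lemma mkWord_apply (hcov : ∀ x : Fin n, ∃! j, x ∈ A j) (hk : 0 < k)
    (X : Finset (Fin n)) (hX : X.card = k) {s : ℕ} (hs : s < k)
    {x : Fin n} {j : Fin k} (hx : x ∈ A ⟨((j : ℕ) + s) % k, Nat.mod_lt _ hk⟩) :
    mkWord A hcov hk X hX s x = X.orderEmbOfFin hX j := by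
  unfold mkWord
  have h1 : jdx A hcov x = ⟨((j : ℕ) + s) % k, Nat.mod_lt _ hk⟩ := jdx_eq A hcov hx
  congr 1
  apply Fin.ext
  show ((jdx A hcov x : ℕ) + k - s % k) % k = (j : ℕ)
  rw [h1, Nat.mod_eq_of_lt hs]
  exact mod_helper1 j.isLt hs

private lemma mkWord_image (hne : ∀ j, (A j).Nonempty)
    (hcov : ∀ x : Fin n, ∃! j, x ∈ A j) (hk : 0 < k)
    (X : Finset (Fin n)) (hX : X.card = k) {s : ℕ} (hs : s < k) :
    Finset.image (mkWord A hcov hk X hX s) Finset.univ = X := by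
  apply Finset.Subset.antisymm
  · intro x hx
    rw [Finset.mem_image] at hx
    obtain ⟨p, _, hp⟩ := hx
    rw [← hp]
    exact Finset.orderEmbOfFin_mem X hX _
  · intro x hx
    set i := (X.orderIsoOfFin hX).symm ⟨x, hx⟩ with hi
    have hei : (X.orderEmbOfFin hX) i = x := by
      rw [← Finset.coe_orderIsoOfFin_apply X hX i, hi]
      simp
    obtain ⟨p, hp⟩ := hne ⟨((i : ℕ) + s) % k, Nat.mod_lt _ hk⟩
    rw [Finset.mem_image]
    exact ⟨p, Finset.mem_univ p, by rw [mkWord_apply A hcov hk X hX hs hp, hei]⟩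

private lemma mkWord_coimage (hne : ∀ j, (A j).Nonempty)
    (hcov : ∀ x : Fin n, ∃! j, x ∈ A j) (hk : 0 < k)
    (X : Finset (Fin n)) (hX : X.card = k) {s : ℕ} (hs : s < k) :
    IsCoimage (mkWord A hcov hk X hX s)
      (fun j : Fin k => A ⟨((j : ℕ) + s) % k, Nat.mod_lt _ j.pos⟩) := by
  have hmem : ∀ (j : Fin k) (x : Fin n),
      x ∈ A ⟨((j : ℕ) + s) % k, Nat.mod_lt _ j.pos⟩ →
      mkWord A hcov hk X hX s x = X.orderEmbOfFin hX j := by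
    intro j x hx
    exact mkWord_apply A hcov hk X hX hs hx
  refine ⟨fun j => hne _, ?_, ?_, ?_⟩
  · intro x
    refine ⟨⟨((jdx A hcov x : ℕ) + k - s) % k, Nat.mod_lt _ hk⟩, ?_⟩
    show x ∈ A ⟨(((jdx A hcov x : ℕ) + k - s) % k + s) % k, Nat.mod_lt _ hk⟩
    rw [show (⟨(((jdx A hcov x : ℕ) + k - s) % k + s) % k, Nat.mod_lt _ hk⟩ : Fin k)
        = jdx A hcov x from Fin.ext (mod_helper3 (jdx A hcov x).isLt hs)]
    exact jdx_mem A hcov x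
  · intro j j' x hx y hy
    rw [hmem j x hx, hmem j' y hy]
    constructor
    · intro h
      exact (X.orderEmbOfFin hX).injective h
    · intro h; rw [h]
  · intro j j' x hx y hy hlt
    rw [hmem j x hx, hmem j' y hy]
    exact (X.orderEmbOfFin hX).strictMono hlt

private lemma mkWord_run (hne : ∀ j, (A j).Nonempty)
    (hcov : ∀ x : Fin n, ∃! j, x ∈ A j) (hk : 0 < k)
    (X : Finset (Fin n)) (hX : X.card = k) {s : ℕ} (hs : s < k)
    {m : ℕ} (hmk : m < k) (hsub : ∀ v : Fin n, (v : ℕ) ≤ m → v ∈ X) :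
    m < runOf (mkWord A hcov hk X hX s) := by
  have hkn : k ≤ n := by
    have := Finset.card_le_univ X
    simpa [hX] using this
  rw [lt_runOf_iff]
  refine ⟨lt_of_lt_of_le hmk hkn, ?_⟩
  intro j hj
  have hjk : j < k := lt_of_le_of_lt hj hmk
  have hval : (X.orderEmbOfFin hX ⟨j, hjk⟩ : ℕ) = j :=
    orderEmb_prefix X hX m hsub j hjk (le_trans hj (le_refl m))
  have hmemX : X.orderEmbOfFin hX ⟨j, hjk⟩ ∈
      Finset.image (mkWord A hcov hk X hX s) Finset.univ := by
    rw [mkWord_image A hne hcov hk X hX hs]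
    exact Finset.orderEmbOfFin_mem X hX _
  rw [Finset.mem_image] at hmemX
  obtain ⟨p, _, hp⟩ := hmemX
  exact ⟨p, by rw [hp, hval]⟩

end Core

section Main

variable {n k : ℕ}

private lemma mkWord_pos0 (A : Fin k → Finset (Fin n)) (hn : 0 < n)
    (hcov : ∀ x : Fin n, ∃! j, x ∈ A j) (hk : 0 < k)
    (X : Finset (Fin n)) (hX : X.card = k) (r : Fin k) :
    mkWord A hcov hk X hX (((jdx A hcov ⟨0, hn⟩ : ℕ) + k - (r : ℕ)) % k) ⟨0, hn⟩
      = X.orderEmbOfFin hX r := by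
  have hs : ((jdx A hcov ⟨0, hn⟩ : ℕ) + k - (r : ℕ)) % k < k := Nat.mod_lt _ hk
  apply mkWord_apply A hcov hk X hX hs
  rw [show (⟨((r : ℕ) + ((jdx A hcov ⟨0, hn⟩ : ℕ) + k - (r : ℕ)) % k) % k,
      Nat.mod_lt _ hk⟩ : Fin k) = jdx A hcov ⟨0, hn⟩ from Fin.ext (by
    show ((r : ℕ) + ((jdx A hcov ⟨0, hn⟩ : ℕ) + k - (r : ℕ)) % k) % k = _
    rw [Nat.add_comm]
    exact mod_helper3 (jdx A hcov ⟨0, hn⟩).isLt r.isLt)]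
  exact jdx_mem A hcov ⟨0, hn⟩

private lemma surj_aux (A : Fin k → Finset (Fin n)) (hn : 0 < n)
    (hcov : ∀ x : Fin n, ∃! j, x ∈ A j) (hk : 0 < k) (hkn : k ≤ n)
    (a : Fin n → Fin n) (hrk : IsRookWord a) (hty : IsOfType a A) :
    ∃ (r : Fin k) (X : Finset (Fin n)) (hX : X.card = k),
      (∀ i : Fin n, (i : ℕ) ≤ (r : ℕ) → i ∈ X) ∧
      mkWord A hcov hk X hX (((jdx A hcov ⟨0, hn⟩ : ℕ) + k - (r : ℕ)) % k) = a := by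
  obtain ⟨s, hs, hB1, hB2, hB3, hB4⟩ := hty
  set B : Fin k → Finset (Fin n) :=
    fun j => A ⟨((j : ℕ) + s) % k, Nat.mod_lt _ j.pos⟩ with hBdef
  set c : Fin k → Fin n := fun j => (hB1 j).choose with hcdef
  have hcmem : ∀ j, c j ∈ B j := fun j => (hB1 j).choose_spec
  set v : Fin k → Fin n := fun j => a (c j) with hvdef
  have hvmono : StrictMono v := fun j j' hlt => hB4 j j' (c j) (hcmem j) (c j') (hcmem j') hlt
  have key : ∀ (p : Fin n) (j : Fin k), p ∈ B j → a p = v j :=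
    fun p j hp => (hB3 j j p hp (c j) (hcmem j)).mpr rfl
  set X : Finset (Fin n) := Finset.image a Finset.univ with hXdef
  have himg : X = Finset.image v Finset.univ := by
    apply Finset.Subset.antisymm
    · intro x hx
      rw [hXdef, Finset.mem_image] at hx
      rw [Finset.mem_image]
      obtain ⟨p, _, hp⟩ := hx
      obtain ⟨j, hj⟩ := hB2 p
      exact ⟨j, Finset.mem_univ j, by rw [← key p j hj, hp]⟩
    · intro x hx
      rw [Finset.mem_image] at hx
      rw [hXdef, Finset.mem_image]
      obtain ⟨j, _, hj⟩ := hx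
      exact ⟨c j, Finset.mem_univ _, hj⟩
  have hX : X.card = k := by
    rw [himg, Finset.card_image_of_injective _ hvmono.injective]
    simp
  have hve : v = X.orderEmbOfFin hX := by
    apply Finset.orderEmbOfFin_unique hX ?_ hvmono
    intro j
    rw [himg, Finset.mem_image]
    exact ⟨j, Finset.mem_univ j, rfl⟩
  have hrot : ∀ p : Fin n,
      p ∈ B ⟨((jdx A hcov p : ℕ) + k - s) % k, Nat.mod_lt _ hk⟩ := by
    intro p
    have he : (⟨(((jdx A hcov p : ℕ) + k - s) % k + s) % k, Nat.mod_lt _ hk⟩ : Fin k)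
        = jdx A hcov p := Fin.ext (mod_helper3 (jdx A hcov p).isLt hs)
    have h2 : p ∈ A (⟨(((jdx A hcov p : ℕ) + k - s) % k + s) % k, Nat.mod_lt _ hk⟩ : Fin k) := by
      rw [he]; exact jdx_mem A hcov p
    exact h2
  have hsmod : s % k = s := Nat.mod_eq_of_lt hs
  have hmk : mkWord A hcov hk X hX s = a := by
    funext p
    have h1 : a p = v ⟨((jdx A hcov p : ℕ) + k - s) % k, Nat.mod_lt _ hk⟩ :=
      key p _ (hrot p)
    show X.orderEmbOfFin hX ⟨((jdx A hcov p : ℕ) + k - s % k) % k, Nat.mod_lt _ hk⟩ = a p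
    rw [h1, hve]
    congr 1
    exact Fin.ext (by rw [hsmod])
  set j0 : Fin k := jdx A hcov ⟨0, hn⟩ with hj0
  refine ⟨⟨((j0 : ℕ) + k - s) % k, Nat.mod_lt _ hk⟩, X, hX, ?_, ?_⟩
  · -- the subset condition, from the rook property
    obtain ⟨hn', hrun⟩ := hrk
    have hrun' : (a ⟨0, hn⟩ : ℕ) + 1 ≤ runOf a := hrun
    set m := runOf a with hm
    have hm1 : 1 ≤ m := by omega
    have hprop := (lt_runOf_iff a (m - 1)).mp (by omega)
    have hpre : ∀ w : Fin n, (w : ℕ) ≤ m - 1 → w ∈ X := by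
      intro w hw
      obtain ⟨x, hx⟩ := hprop.2 (w : ℕ) hw
      rw [hXdef, Finset.mem_image]
      exact ⟨x, Finset.mem_univ x, Fin.ext hx⟩
    have hmk2 : m ≤ k := by
      have hsubF : Finset.univ.filter (fun i : Fin n => (i : ℕ) ≤ m - 1) ⊆ X := by
        intro i hi
        rw [Finset.mem_filter] at hi
        exact hpre i hi.2
      have hcF := card_val_le (m - 1) (show m - 1 < n by omega)
      have hle := Finset.card_le_card hsubF
      rw [hcF, hX] at hle
      omega
    have hav : a ⟨0, hn⟩
        = X.orderEmbOfFin hX ⟨((j0 : ℕ) + k - s) % k, Nat.mod_lt _ hk⟩ := by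
      have := key _ _ (hrot ⟨0, hn⟩)
      rw [hve] at this
      exact this
    have hrval : ((j0 : ℕ) + k - s) % k ≤ m - 1 := by
      by_contra hcon
      push_neg at hcon
      have hm1k : m - 1 < k := by omega
      have hpm : (X.orderEmbOfFin hX ⟨m - 1, hm1k⟩ : ℕ) = m - 1 :=
        orderEmb_prefix X hX (m - 1) hpre (m - 1) hm1k (le_refl _)
      have hlt : X.orderEmbOfFin hX ⟨m - 1, hm1k⟩
          < X.orderEmbOfFin hX ⟨((j0 : ℕ) + k - s) % k, Nat.mod_lt _ hk⟩ :=
        (X.orderEmbOfFin hX).strictMono (by rw [Fin.lt_def]; exact hcon)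
      rw [hav] at hrun'
      rw [Fin.lt_def, hpm] at hlt
      omega
    intro i hi
    exact hpre i (le_trans hi hrval)
  · show mkWord A hcov hk X hX (((j0 : ℕ) + k - (((j0 : ℕ) + k - s) % k)) % k) = a
    rw [mod_helper2 j0.isLt hs]
    exact hmk

private lemma count_X (hkn : k ≤ n) (r : Fin k) :
    Nat.card {X : Finset (Fin n) // X.card = k ∧ ∀ i : Fin n, (i : ℕ) ≤ (r : ℕ) → i ∈ X}
      = (n - ((r : ℕ) + 1)).choose (k - ((r : ℕ) + 1)) := by
  classical
  set F : Finset (Fin n) := Finset.univ.filter (fun i : Fin n => (i : ℕ) ≤ (r : ℕ)) with hF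
  set G : Finset (Fin n) := Finset.univ.filter (fun i : Fin n => ¬ (i : ℕ) ≤ (r : ℕ)) with hG
  have hrn : (r : ℕ) < n := lt_of_lt_of_le r.isLt hkn
  have hFcard : F.card = (r : ℕ) + 1 := card_val_le _ hrn
  have hFG : F.card + G.card = n := by
    have h := Finset.card_filter_add_card_filter_not (s := (Finset.univ : Finset (Fin n)))
      (p := fun i : Fin n => (i : ℕ) ≤ (r : ℕ))
    simpa [hF, hG] using h
  have hGcard : G.card = n - ((r : ℕ) + 1) := by omega
  have hdisj : Disjoint F G := by
    rw [Finset.disjoint_left]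
    intro x hx hx'
    rw [hF, Finset.mem_filter] at hx
    rw [hG, Finset.mem_filter] at hx'
    exact hx'.2 hx.2
  have hFsub : ∀ (X : Finset (Fin n)), (∀ i : Fin n, (i : ℕ) ≤ (r : ℕ) → i ∈ X) → F ⊆ X := by
    intro X hX i hi
    rw [hF, Finset.mem_filter] at hi
    exact hX i hi.2
  have e : {X : Finset (Fin n) // X.card = k ∧ ∀ i : Fin n, (i : ℕ) ≤ (r : ℕ) → i ∈ X}
      ≃ {Y : Finset (Fin n) // Y ∈ G.powersetCard (k - ((r : ℕ) + 1))} :=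
    { toFun := fun X => ⟨X.1 \ F, by
        rw [Finset.mem_powersetCard]
        constructor
        · intro i hi
          rw [Finset.mem_sdiff] at hi
          rw [hG, Finset.mem_filter]
          refine ⟨Finset.mem_univ i, fun hle => hi.2 ?_⟩
          rw [hF, Finset.mem_filter]
          exact ⟨Finset.mem_univ i, hle⟩
        · rw [Finset.card_sdiff_of_subset (hFsub X.1 X.2.2), X.2.1, hFcard]⟩,
      invFun := fun Y => ⟨Y.1 ∪ F, by
        have hY := Y.2
        rw [Finset.mem_powersetCard] at hY
        have hdYF : Disjoint Y.1 F := Finset.disjoint_of_subset_left hY.1 hdisj.symm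
        constructor
        · rw [Finset.card_union_of_disjoint hdYF, hY.2, hFcard]
          have := r.isLt
          omega
        · intro i hle
          apply Finset.mem_union_right
          rw [hF, Finset.mem_filter]
          exact ⟨Finset.mem_univ i, hle⟩⟩,
      left_inv := fun X => by
        apply Subtype.ext
        exact Finset.sdiff_union_of_subset (hFsub X.1 X.2.2),
      right_inv := fun Y => by
        apply Subtype.ext
        have hY := Y.2
        rw [Finset.mem_powersetCard] at hY
        have hdYF : Disjoint Y.1 F := Finset.disjoint_of_subset_left hY.1 hdisj.symm
        show (Y.1 ∪ F) \ F = Y.1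
        rw [Finset.union_sdiff_right]
        exact Finset.sdiff_eq_self_of_disjoint hdYF }
  rw [Nat.card_congr e, Nat.card_eq_fintype_card, Fintype.card_coe,
    Finset.card_powersetCard, hGcard]

end Main

theorem rw_type_count (n k : ℕ) (hn : 1 ≤ n) (A : Fin k → Finset (Fin n))
    (hne : ∀ j, (A j).Nonempty) (hcov : ∀ x : Fin n, ∃! j, x ∈ A j) :
    Nat.card {a : Fin n → Fin n // IsRookWord a ∧ IsOfType a A} =
      n.choose (k - 1) := by
  classical
  have hn0 : 0 < n := hn
  have hk : 0 < k := (jdx A hcov ⟨0, hn0⟩).pos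
  have hkn : k ≤ n := by
    have hinj : Function.Injective (fun j : Fin k => (hne j).choose) := by
      intro j j' he
      have h1 : (hne j).choose ∈ A j := (hne j).choose_spec
      have h2 : (hne j).choose ∈ A j' := by
        have h3 := (hne j').choose_spec
        simp only at he
        rw [he]
        exact h3
      obtain ⟨jj, hjj, hu⟩ := hcov (hne j).choose
      rw [hu j h1, hu j' h2]
    simpa using Fintype.card_le_of_injective _ hinj
  set j0 : Fin k := jdx A hcov ⟨0, hn0⟩ with hj0
  let f : {p : Fin k × Finset (Fin n) //
        p.2.card = k ∧ ∀ i : Fin n, (i : ℕ) ≤ (p.1 : ℕ) → i ∈ p.2} →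
      {a : Fin n → Fin n // IsRookWord a ∧ IsOfType a A} := fun t =>
    ⟨mkWord A hcov hk t.1.2 t.2.1 (((j0 : ℕ) + k - (t.1.1 : ℕ)) % k), by
      have hs : ((j0 : ℕ) + k - (t.1.1 : ℕ)) % k < k := Nat.mod_lt _ hk
      constructor
      · refine ⟨hn0, ?_⟩
        have hp0 := mkWord_pos0 A hn0 hcov hk t.1.2 t.2.1 t.1.1
        have hval : ((t.1.2).orderEmbOfFin t.2.1 t.1.1 : ℕ) = (t.1.1 : ℕ) := by
          have h := orderEmb_prefix t.1.2 t.2.1 (t.1.1 : ℕ) t.2.2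
            (t.1.1 : ℕ) t.1.1.isLt (le_refl _)
          simpa using h
        rw [hp0, hval]
        exact mkWord_run A hne hcov hk t.1.2 t.2.1 hs t.1.1.isLt t.2.2
      · exact ⟨_, hs, mkWord_coimage A hne hcov hk t.1.2 t.2.1 hs⟩⟩
  have hbij : Function.Bijective f := by
    constructor
    · rintro ⟨⟨r, X⟩, hX, hsub⟩ ⟨⟨r', X'⟩, hX', hsub'⟩ heq
      simp only [f, Subtype.mk.injEq] at heq
      have hXX : X = X' := by
        have h1 := mkWord_image A hne hcov hk X hX
          (s := ((j0 : ℕ) + k - (r : ℕ)) % k) (Nat.mod_lt _ hk)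
        have h2 := mkWord_image A hne hcov hk X' hX'
          (s := ((j0 : ℕ) + k - (r' : ℕ)) % k) (Nat.mod_lt _ hk)
        rw [← h1, ← h2, heq]
      subst hXX
      have hr : r = r' := by
        have e1 := mkWord_pos0 A hn0 hcov hk X hX r
        have e2 := mkWord_pos0 A hn0 hcov hk X hX' r'
        have h3 : X.orderEmbOfFin hX r = X.orderEmbOfFin hX r' := by
          rw [← e1]
          have h4 := congrFun heq ⟨0, hn0⟩
          rw [h4]
          exact e2
        exact (X.orderEmbOfFin hX).injective h3
      subst hr
      rfl
    · rintro ⟨a, ha⟩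
      obtain ⟨r, X, hX, hsub, hmk⟩ := surj_aux A hn0 hcov hk hkn a ha.1 ha.2
      exact ⟨⟨(r, X), hX, hsub⟩, Subtype.ext hmk⟩
  rw [(Nat.card_eq_of_bijective f hbij).symm]
  rw [Nat.card_congr (Equiv.subtypeProdEquivSigmaSubtype
    (fun (r : Fin k) (X : Finset (Fin n)) =>
      X.card = k ∧ ∀ i : Fin n, (i : ℕ) ≤ (r : ℕ) → i ∈ X))]
  rw [Nat.card_eq_fintype_card, Fintype.card_sigma]
  have hterm : ∀ r : Fin k,
      Fintype.card {X : Finset (Fin n) // X.card = k ∧ ∀ i : Fin n, (i : ℕ) ≤ (r : ℕ) → i ∈ X}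
        = (n - ((r : ℕ) + 1)).choose (k - ((r : ℕ) + 1)) := by
    intro r
    rw [← Nat.card_eq_fintype_card]
    exact count_X hkn r
  rw [Finset.sum_congr rfl (fun r _ => hterm r)]
  rw [Fin.sum_univ_eq_sum_range (fun r => (n - (r + 1)).choose (k - (r + 1))) k]
  exact sum_main hk hkn


end
end

section
/- Let n ≥ 1, let 𝔄 = (A_1,…,A_k) be an ordered partition of {1,…,n} into k nonempty blocks, and let r be an integer with 1 ≤ r ≤ k. The number of rook words a of length n with run(a) = r that are of type 𝔄 equals r · binom(n−r−1, k−r). -/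
open Finset

noncomputable section
open scoped Classical

lemma md1 (k t u : ℕ) (ht : t < k) (hu : u < k) : ((t + k - u) % k + u) % k = t := by
  rw [Nat.mod_add_mod]
  have : t + k - u + u = t + k := by omega
  rw [this, Nat.add_mod_right, Nat.mod_eq_of_lt ht]

lemma md2 (k i u : ℕ) (hi : i < k) (hu : u < k) : ((i + u) % k + k - u) % k = i := by
  have h1 : (i + u) % k + k - u = (i + u) % k + (k - u) := by omega
  rw [h1, Nat.mod_add_mod]
  have : i + u + (k - u) = i + k := by omega
  rw [this, Nat.add_mod_right, Nat.mod_eq_of_lt hi]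

lemma downclosed_mem_iff (F : Finset ℕ) (h : ∀ i ∈ F, ∀ j, j ≤ i → j ∈ F) (i : ℕ) :
    i ∈ F ↔ i < F.card := by
  constructor
  · intro hi
    have hsub : Finset.range (i + 1) ⊆ F := by
      intro j hj
      exact h i hi j (by simpa using Nat.lt_succ_iff.mp (Finset.mem_range.mp hj))
    have := Finset.card_le_card hsub
    simpa using this
  · intro hi
    by_contra hni
    have hsub : F ⊆ Finset.range i := by
      intro j hj
      rw [Finset.mem_range]
      by_contra hji
      exact hni (h j hj i (by omega))
    have := Finset.card_le_card hsub
    simp at this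
    omega


lemma runOf_eq_iff {n : ℕ} (a : Fin n → Fin n) (r : ℕ) (hrn : r ≤ n) :
    runOf a = r ↔ (∀ j < r, ∃ x, (a x : ℕ) = j) ∧ (r < n → ¬ ∃ x, (a x : ℕ) = r) := by
  set F := (Finset.range n).filter (fun i => ∀ j ≤ i, ∃ x : Fin n, (a x : ℕ) = j) with hF
  have hdc : ∀ i ∈ F, ∀ j, j ≤ i → j ∈ F := by
    intro i hi j hj
    rw [hF, Finset.mem_filter, Finset.mem_range] at hi ⊢
    exact ⟨by omega, fun j' hj' => hi.2 j' (le_trans hj' hj)⟩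
  have hcard : runOf a = F.card := rfl
  constructor
  · intro hc
    rw [hcard] at hc
    constructor
    · intro j hj
      have : j ∈ F := (downclosed_mem_iff F hdc j).mpr (by omega)
      rw [hF, Finset.mem_filter] at this
      exact this.2 j le_rfl
    · intro hrn' hex
      have : r ∈ F := by
        rw [hF, Finset.mem_filter, Finset.mem_range]
        refine ⟨hrn', fun j hj => ?_⟩
        rcases Nat.lt_or_ge j r with h' | h'
        · have : j ∈ F := (downclosed_mem_iff F hdc j).mpr (by omega)
          rw [hF, Finset.mem_filter] at this
          exact this.2 j le_rfl
        · have : j = r := by omega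
          subst this; exact hex
      rw [downclosed_mem_iff F hdc] at this
      omega
  · rintro ⟨h1, h2⟩
    have : F = Finset.range r := by
      ext i
      rw [hF, Finset.mem_filter, Finset.mem_range, Finset.mem_range]
      constructor
      · rintro ⟨hin, hP⟩
        by_contra hir
        push_neg at hir
        exact h2 (by omega) (hP r hir)
      · intro hir
        exact ⟨by omega, fun j hj => h1 j (by omega)⟩
    rw [hcard, this, Finset.card_range]


namespace RWaux

def tOf {n k : ℕ} (A : Fin k → Finset (Fin n)) (hcov : ∀ x : Fin n, ∃! j, x ∈ A j)
    (x : Fin n) : Fin k := Fintype.choose _ (hcov x)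

lemma tOf_mem {n k : ℕ} (A : Fin k → Finset (Fin n)) (hcov : ∀ x : Fin n, ∃! j, x ∈ A j)
    (x : Fin n) : x ∈ A (tOf A hcov x) := Fintype.choose_spec _ (hcov x)

lemma tOf_eq {n k : ℕ} (A : Fin k → Finset (Fin n)) (hcov : ∀ x : Fin n, ∃! j, x ∈ A j)
    {x : Fin n} {j : Fin k} (h : x ∈ A j) : tOf A hcov x = j :=
  (hcov x).unique (tOf_mem A hcov x) h

def xval {n k : ℕ} (r : ℕ) (hkn : k ≤ n) (X : Finset (Fin n)) (hX : X.card = k - r)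
    (i : Fin k) : Fin n :=
  if _ : (i : ℕ) < r then ⟨i, by have := i.isLt; omega⟩
  else X.orderEmbOfFin hX ⟨(i : ℕ) - r, by have := i.isLt; omega⟩

lemma xval_lt {n k : ℕ} (r : ℕ) (hkn : k ≤ n) (X : Finset (Fin n)) (hX : X.card = k - r)
    {i : Fin k} (h : (i : ℕ) < r) :
    xval r hkn X hX i = ⟨i, by have := i.isLt; omega⟩ := by
  rw [xval, dif_pos h]

lemma xval_ge {n k : ℕ} (r : ℕ) (hkn : k ≤ n) (X : Finset (Fin n)) (hX : X.card = k - r)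
    {i : Fin k} (h : ¬ (i : ℕ) < r) :
    xval r hkn X hX i = X.orderEmbOfFin hX ⟨(i : ℕ) - r, by have := i.isLt; omega⟩ := by
  rw [xval, dif_neg h]

lemma xval_strictMono {n k : ℕ} (r : ℕ) (hkn : k ≤ n) (X : Finset (Fin n))
    (hX : X.card = k - r) (hXhi : ∀ x ∈ X, r < (x : ℕ)) :
    StrictMono (xval r hkn X hX) := by
  intro i i' hii
  rcases Nat.lt_or_ge (i : ℕ) r with h | h
  · rcases Nat.lt_or_ge (i' : ℕ) r with h' | h'
    · rw [xval_lt r hkn X hX h, xval_lt r hkn X hX h']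
      exact hii
    · have h2 : r < (xval r hkn X hX i' : ℕ) := by
        rw [xval_ge r hkn X hX (by omega)]
        exact hXhi _ (Finset.orderEmbOfFin_mem X hX _)
      have h1 : (xval r hkn X hX i : ℕ) = (i : ℕ) := by rw [xval_lt r hkn X hX h]
      exact Fin.lt_def.mpr (by omega)
  · have h' : r ≤ (i' : ℕ) := le_trans h (le_of_lt hii)
    rw [xval_ge r hkn X hX (by omega), xval_ge r hkn X hX (by omega)]
    apply (X.orderEmbOfFin hX).strictMono
    exact Fin.lt_def.mpr (by simp; omega)

def mkWord {n k : ℕ} (r : ℕ) (hkn : k ≤ n) (hk : 0 < k)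
    (A : Fin k → Finset (Fin n)) (hcov : ∀ x : Fin n, ∃! j, x ∈ A j)
    (s : ℕ) (X : Finset (Fin n)) (hX : X.card = k - r) (p : Fin n) : Fin n :=
  xval r hkn X hX ⟨((tOf A hcov p : ℕ) + k - s) % k, Nat.mod_lt _ hk⟩

lemma mkWord_apply {n k : ℕ} (r : ℕ) (hkn : k ≤ n) (hk : 0 < k)
    (A : Fin k → Finset (Fin n)) (hcov : ∀ x : Fin n, ∃! j, x ∈ A j)
    (s : ℕ) (hs : s < k) (X : Finset (Fin n)) (hX : X.card = k - r)
    (i : Fin k) (p : Fin n)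
    (hp : p ∈ A ⟨((i : ℕ) + s) % k, Nat.mod_lt _ hk⟩) :
    mkWord r hkn hk A hcov s X hX p = xval r hkn X hX i := by
  have h2 : tOf A hcov p = ⟨((i : ℕ) + s) % k, Nat.mod_lt _ hk⟩ := tOf_eq A hcov hp
  have h1 : (⟨((tOf A hcov p : ℕ) + k - s) % k, Nat.mod_lt _ hk⟩ : Fin k) = i := by
    apply Fin.ext
    rw [h2]
    simpa using md2 k i s i.isLt hs
  unfold mkWord
  exact congrArg _ h1

lemma mkWord_coimage {n k : ℕ} (r : ℕ) (hkn : k ≤ n) (hk : 0 < k)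
    (A : Fin k → Finset (Fin n)) (hne : ∀ j, (A j).Nonempty)
    (hcov : ∀ x : Fin n, ∃! j, x ∈ A j)
    (s : ℕ) (hs : s < k) (X : Finset (Fin n)) (hX : X.card = k - r)
    (hXhi : ∀ x ∈ X, r < (x : ℕ)) :
    IsCoimage (mkWord r hkn hk A hcov s X hX)
      (fun i : Fin k => A ⟨((i : ℕ) + s) % k, Nat.mod_lt _ hk⟩) := by
  have hval : ∀ (i : Fin k) (p : Fin n), p ∈ A ⟨((i : ℕ) + s) % k, Nat.mod_lt _ hk⟩ →
      mkWord r hkn hk A hcov s X hX p = xval r hkn X hX i :=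
    fun i p hp => mkWord_apply r hkn hk A hcov s hs X hX i p hp
  have hsm := xval_strictMono r hkn X hX hXhi
  refine ⟨fun i => hne _, ?_, ?_, ?_⟩
  · intro p
    refine ⟨⟨((tOf A hcov p : ℕ) + k - s) % k, Nat.mod_lt _ hk⟩, ?_⟩
    have : (((((tOf A hcov p : ℕ) + k - s) % k) + s) % k) = (tOf A hcov p : ℕ) :=
      md1 k _ s (tOf A hcov p).isLt hs
    simp only []
    have heq : (⟨((((tOf A hcov p : ℕ) + k - s) % k) + s) % k, Nat.mod_lt _ hk⟩ : Fin k)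
        = tOf A hcov p := Fin.ext this
    rw [heq]
    exact tOf_mem A hcov p
  · intro i i' x hx y hy
    rw [hval i x hx, hval i' y hy]
    exact ⟨fun h => hsm.injective h, fun h => by rw [h]⟩
  · intro i i' x hx y hy hii
    rw [hval i x hx, hval i' y hy]
    exact hsm hii

lemma card_filter_le (n m : ℕ) :
    ((Finset.univ.filter (fun x : Fin n => m ≤ (x : ℕ)))).card = n - m := by
  rw [← Finset.card_image_of_injective _ Fin.val_injective]
  have h : (Finset.univ.filter (fun x : Fin n => m ≤ (x : ℕ))).image Fin.val
      = Finset.Ico m n := by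
    ext y
    simp only [Finset.mem_image, Finset.mem_filter, Finset.mem_univ, true_and, Finset.mem_Ico]
    constructor
    · rintro ⟨x, hx, rfl⟩; exact ⟨hx, x.isLt⟩
    · rintro ⟨h1, h2⟩; exact ⟨⟨y, h2⟩, h1, rfl⟩
  rw [h, Nat.card_Ico]

def psi {n k : ℕ} (r : ℕ) (hkn : k ≤ n) (hk : 0 < k)
    (A : Fin k → Finset (Fin n)) (hcov : ∀ x : Fin n, ∃! j, x ∈ A j) (hn : 0 < n)
    (j : ℕ) (X : Finset (Fin n)) (hX : X.card = k - r) : Fin n → Fin n :=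
  mkWord r hkn hk A hcov (((tOf A hcov ⟨0, hn⟩ : ℕ) + k - j) % k) X hX

lemma psi_at_zero {n k : ℕ} (r : ℕ) (hkn : k ≤ n) (hk : 0 < k)
    (A : Fin k → Finset (Fin n)) (hcov : ∀ x : Fin n, ∃! j, x ∈ A j) (hn : 0 < n)
    (j : ℕ) (hjk : j < k) (X : Finset (Fin n)) (hX : X.card = k - r) :
    psi r hkn hk A hcov hn j X hX ⟨0, hn⟩
      = xval r hkn X hX ⟨j, hjk⟩ := by
  set t0 : Fin k := tOf A hcov ⟨0, hn⟩ with ht0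
  have hs : ((t0 : ℕ) + k - j) % k < k := Nat.mod_lt _ hk
  have hjs : ((j : ℕ) + (((t0 : ℕ) + k - j) % k)) % k = (t0 : ℕ) := by
    rw [Nat.add_comm]
    exact md1 k t0 j t0.isLt hjk
  apply mkWord_apply r hkn hk A hcov _ hs X hX ⟨j, hjk⟩ ⟨0, hn⟩
  have : (⟨((j : ℕ) + (((t0 : ℕ) + k - j) % k)) % k, Nat.mod_lt _ hk⟩ : Fin k) = t0 :=
    Fin.ext hjs
  rw [this]
  exact tOf_mem A hcov _

lemma psi_spec {n k : ℕ} (r : ℕ) (hkn : k ≤ n) (hk : 0 < k)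
    (A : Fin k → Finset (Fin n)) (hne : ∀ j, (A j).Nonempty)
    (hcov : ∀ x : Fin n, ∃! j, x ∈ A j) (hn : 0 < n)
    (hr : 1 ≤ r) (hrk : r ≤ k)
    (j : ℕ) (hj : j < r) (X : Finset (Fin n)) (hX : X.card = k - r)
    (hXhi : ∀ x ∈ X, r < (x : ℕ)) :
    IsRookWord (psi r hkn hk A hcov hn j X hX) ∧
      runOf (psi r hkn hk A hcov hn j X hX) = r ∧
      IsOfType (psi r hkn hk A hcov hn j X hX) A := by
  set t0 : Fin k := tOf A hcov ⟨0, hn⟩ with ht0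
  set s : ℕ := ((t0 : ℕ) + k - j) % k with hsdef
  have hs : s < k := Nat.mod_lt _ hk
  set a := psi r hkn hk A hcov hn j X hX with ha
  have hjk : j < k := lt_of_lt_of_le hj hrk
  -- every value of a is an xval
  have hform : ∀ p : Fin n, ∃ i : Fin k, a p = xval r hkn X hX i := by
    intro p
    exact ⟨_, rfl⟩
  -- every xval is attained
  have hatt : ∀ i : Fin k, ∃ p : Fin n, a p = xval r hkn X hX i := by
    intro i
    obtain ⟨p, hp⟩ := hne ⟨((i : ℕ) + s) % k, Nat.mod_lt _ hk⟩
    exact ⟨p, mkWord_apply r hkn hk A hcov s hs X hX i p hp⟩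
  have hxlt : ∀ (i : Fin k) (h : (i : ℕ) < r), (xval r hkn X hX i : ℕ) = (i : ℕ) := by
    intro i h
    rw [xval_lt r hkn X hX h]
  have hxge : ∀ (i : Fin k), ¬ ((i : ℕ) < r) → r < (xval r hkn X hX i : ℕ) := by
    intro i h
    rw [xval_ge r hkn X hX h]
    exact hXhi _ (Finset.orderEmbOfFin_mem X hX _)
  have hrun : runOf a = r := by
    rw [runOf_eq_iff a r (le_trans hrk hkn)]
    constructor
    · intro m hm
      obtain ⟨p, hp⟩ := hatt ⟨m, lt_of_lt_of_le hm hrk⟩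
      exact ⟨p, by rw [hp, hxlt _ hm]⟩
    · rintro hrn ⟨p, hp⟩
      obtain ⟨i, hi⟩ := hform p
      rw [hi] at hp
      rcases Nat.lt_or_ge (i : ℕ) r with h | h
      · rw [hxlt i h] at hp; omega
      · have := hxge i (by omega); omega
  refine ⟨⟨hn, ?_⟩, hrun, s, hs, mkWord_coimage r hkn hk A hne hcov s hs X hX hXhi⟩
  rw [hrun]
  have h0 := psi_at_zero r hkn hk A hcov hn j hjk X hX
  rw [← ha] at h0
  rw [h0, hxlt ⟨j, hjk⟩ hj]
  exact hj

lemma psi_extract {n k : ℕ} (r : ℕ) (hkn : k ≤ n) (hk : 0 < k)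
    (A : Fin k → Finset (Fin n)) (hne : ∀ j, (A j).Nonempty)
    (hcov : ∀ x : Fin n, ∃! j, x ∈ A j) (hn : 0 < n)
    (j : ℕ) (X : Finset (Fin n)) (hX : X.card = k - r)
    (hXhi : ∀ x ∈ X, r < (x : ℕ)) :
    (Finset.univ.image (psi r hkn hk A hcov hn j X hX)).filter
      (fun x : Fin n => r < (x : ℕ)) = X := by
  set s : ℕ := ((tOf A hcov ⟨0, hn⟩ : ℕ) + k - j) % k with hsdef
  have hs : s < k := Nat.mod_lt _ hk
  have happ : ∀ p : Fin n, psi r hkn hk A hcov hn j X hX p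
      = xval r hkn X hX ⟨((tOf A hcov p : ℕ) + k - s) % k, Nat.mod_lt _ hk⟩ :=
    fun p => rfl
  ext x
  simp only [Finset.mem_filter, Finset.mem_image, Finset.mem_univ, true_and]
  constructor
  · rintro ⟨⟨p, rfl⟩, hrx⟩
    rw [happ p] at hrx ⊢
    set i : Fin k := ⟨((tOf A hcov p : ℕ) + k - s) % k, Nat.mod_lt _ hk⟩ with hi
    rcases Nat.lt_or_ge (i : ℕ) r with h | h
    · have hxl : (xval r hkn X hX i : ℕ) = (i : ℕ) := by rw [xval_lt r hkn X hX h]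
      omega
    · rw [xval_ge r hkn X hX (by omega)]
      exact Finset.orderEmbOfFin_mem X hX _
  · intro hx
    refine ⟨?_, hXhi x hx⟩
    have hxr : ∃ q : Fin (k - r), X.orderEmbOfFin hX q = x := by
      have h := Finset.range_orderEmbOfFin X hX
      rw [Set.ext_iff] at h
      exact (h x).mpr hx
    obtain ⟨q, hq⟩ := hxr
    have hqk : r + (q : ℕ) < k := by have := q.isLt; omega
    obtain ⟨p, hp⟩ := hne ⟨((r + (q : ℕ)) + s) % k, Nat.mod_lt _ hk⟩
    refine ⟨p, ?_⟩
    have hmk := mkWord_apply r hkn hk A hcov s hs X hX ⟨r + (q : ℕ), hqk⟩ p hp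
    have hps : psi r hkn hk A hcov hn j X hX p = mkWord r hkn hk A hcov s X hX p := rfl
    rw [hps, hmk, xval_ge r hkn X hX (by show ¬ r + (q : ℕ) < r; omega), ← hq]
    congr 1
    apply Fin.ext
    show r + (q : ℕ) - r = (q : ℕ)
    omega

lemma main_surj {n k : ℕ} (r : ℕ) (hkn : k ≤ n) (hk : 0 < k)
    (A : Fin k → Finset (Fin n)) (hne : ∀ j, (A j).Nonempty)
    (hcov : ∀ x : Fin n, ∃! j, x ∈ A j) (hn : 0 < n)
    (hr : 1 ≤ r) (hrk : r ≤ k)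
    (a : Fin n → Fin n) (hrook : IsRookWord a) (hrun : runOf a = r)
    (htype : IsOfType a A) :
    ∃ (j : ℕ) (_ : j < r) (X : Finset (Fin n)) (hX : X.card = k - r)
      (_ : ∀ x ∈ X, r < (x : ℕ)), a = psi r hkn hk A hcov hn j X hX := by
  obtain ⟨s, hs, hco⟩ := htype
  obtain ⟨hBne, hBcov, hBfib, hBmono⟩ := hco
  have hrep : ∀ i : Fin k, ∃ p : Fin n, p ∈ A ⟨((i : ℕ) + s) % k, Nat.mod_lt _ i.pos⟩ :=
    fun i => hBne i
  set V : Fin k → Fin n := fun i => a (hrep i).choose with hV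
  have hVa : ∀ (i : Fin k) (p : Fin n),
      p ∈ A ⟨((i : ℕ) + s) % k, Nat.mod_lt _ i.pos⟩ → a p = V i :=
    fun i p hp => (hBfib i i p hp _ (hrep i).choose_spec).mpr rfl
  have hVmono : StrictMono V :=
    fun i i' h => hBmono i i' _ (hrep i).choose_spec _ (hrep i').choose_spec h
  obtain ⟨h1, h2⟩ := (runOf_eq_iff a r (le_trans hrk hkn)).mp hrun
  -- values below r
  have hVlt' : ∀ m : ℕ, m < r → ∀ i : Fin k, (i : ℕ) = m → (V i : ℕ) = m := by
    intro m
    induction m using Nat.strong_induction_on with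
    | _ m IH =>
    intro hm i him
    obtain ⟨x, hx⟩ := h1 _ hm
    obtain ⟨i', hi'⟩ := hBcov x
    have hax : a x = V i' := hVa i' x hi'
    have hVi' : (V i' : ℕ) = m := by rw [← hax, hx]
    have hii : (i' : ℕ) = m := by
      rcases lt_trichotomy (i' : ℕ) m with h | h | h
      · have := IH (i' : ℕ) h (by omega) i' rfl
        omega
      · exact h
      · exfalso
        have hViVi' : V i < V i' := hVmono (Fin.lt_def.mpr (by omega))
        have h6 := Fin.lt_def.mp hViVi'
        rcases Nat.eq_zero_or_pos m with h0 | h0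
        · omega
        · have hmk : m - 1 < k := by have := i.isLt; omega
          have h3 := IH (m - 1) (by omega) (by omega) ⟨m - 1, hmk⟩ rfl
          have h4 : V ⟨m - 1, hmk⟩ < V i :=
            hVmono (Fin.lt_def.mpr (by show m - 1 < (i : ℕ); omega))
          have h5 := Fin.lt_def.mp h4
          omega
    have heq : i' = i := Fin.ext (by omega)
    rw [heq] at hVi'
    exact hVi'
  have hVlt : ∀ i : Fin k, (i : ℕ) < r → (V i : ℕ) = (i : ℕ) :=
    fun i hi => hVlt' _ hi i rfl
  have hVge : ∀ i : Fin k, r ≤ (i : ℕ) → r < (V i : ℕ) := by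
    intro i hi
    have hrklt : r < n := lt_of_le_of_lt hi (lt_of_lt_of_le i.isLt hkn)
    have hrik : r < k := lt_of_le_of_lt hi i.isLt
    have hVir : r ≤ (V ⟨r, hrik⟩ : ℕ) := by
      have hmk : r - 1 < k := by omega
      have h3 := hVlt ⟨r - 1, hmk⟩ (by show r - 1 < r; omega)
      have h4 : V ⟨r - 1, hmk⟩ < V ⟨r, hrik⟩ :=
        hVmono (Fin.lt_def.mpr (by show r - 1 < r; omega))
      have h5 := Fin.lt_def.mp h4
      have h6 : (⟨r - 1, hmk⟩ : Fin k).val = r - 1 := rfl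
      omega
    have hVirne : (V ⟨r, hrik⟩ : ℕ) ≠ r := by
      intro hc
      exact h2 hrklt ⟨(hrep ⟨r, hrik⟩).choose, hc⟩
    have hle : V ⟨r, hrik⟩ ≤ V i := hVmono.monotone (Fin.le_def.mpr (by show r ≤ (i : ℕ); omega))
    have := Fin.le_def.mp hle
    omega
  -- the first letter
  obtain ⟨h0n, hle0⟩ := hrook
  have hle' : (a ⟨0, hn⟩ : ℕ) + 1 ≤ r := by rw [← hrun]; exact hle0
  set j : ℕ := (a ⟨0, hn⟩ : ℕ) with hjdef
  have hj : j < r := by omega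
  have hjk : j < k := lt_of_lt_of_le hj hrk
  obtain ⟨i0, hi0⟩ := hBcov ⟨0, hn⟩
  have ha0 : a ⟨0, hn⟩ = V i0 := hVa i0 _ hi0
  have hi0r : (i0 : ℕ) < r := by
    by_contra hcon
    have := hVge i0 (by omega)
    rw [← ha0] at this
    omega
  have hi0j : (i0 : ℕ) = j := by
    have h' := hVlt i0 hi0r
    have : j = (V i0 : ℕ) := by rw [hjdef, ha0]
    omega
  have ht0 : tOf A hcov ⟨0, hn⟩ = ⟨((i0 : ℕ) + s) % k, Nat.mod_lt _ i0.pos⟩ :=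
    tOf_eq A hcov hi0
  have hseq : ((tOf A hcov ⟨0, hn⟩ : ℕ) + k - j) % k = s := by
    rw [ht0]
    show (((i0 : ℕ) + s) % k + k - j) % k = s
    rw [hi0j, Nat.add_comm j s]
    exact md2 k s j hs hjk
  -- the high letters
  set X : Finset (Fin n) := (Finset.univ.image a).filter (fun x : Fin n => r < (x : ℕ))
    with hXdef
  have hXiff : ∀ x : Fin n, x ∈ X ↔ ∃ i : Fin k, r ≤ (i : ℕ) ∧ V i = x := by
    intro x
    rw [hXdef, Finset.mem_filter, Finset.mem_image]
    constructor
    · rintro ⟨⟨p, -, rfl⟩, hrx⟩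
      obtain ⟨i, hpi⟩ := hBcov p
      have h6 : a p = V i := hVa i p hpi
      refine ⟨i, ?_, h6.symm⟩
      by_contra hcon
      have h5 : (V i : ℕ) = (i : ℕ) := hVlt i (by omega)
      rw [h6] at hrx
      omega
    · rintro ⟨i, hri, rfl⟩
      exact ⟨⟨(hrep i).choose, Finset.mem_univ _, (hVa i _ (hrep i).choose_spec).symm⟩,
        hVge i hri⟩
  have hXim : X = (Finset.univ.filter (fun i : Fin k => r ≤ (i : ℕ))).image V := by
    ext x
    rw [hXiff x, Finset.mem_image]
    constructor
    · rintro ⟨i, h1', h2'⟩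
      exact ⟨i, Finset.mem_filter.mpr ⟨Finset.mem_univ _, h1'⟩, h2'⟩
    · rintro ⟨i, hi, h2'⟩
      exact ⟨i, (Finset.mem_filter.mp hi).2, h2'⟩
  have hXcard : X.card = k - r := by
    rw [hXim, Finset.card_image_of_injective _ hVmono.injective, card_filter_le]
  have hXhi : ∀ x ∈ X, r < (x : ℕ) := by
    intro x hx
    rw [hXdef] at hx
    exact (Finset.mem_filter.mp hx).2
  -- the sorted enumeration of X is given by V
  have hfs : ∀ q : Fin (k - r),
      (fun q : Fin (k - r) => V ⟨r + (q : ℕ), by have := q.isLt; omega⟩) q ∈ X := by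
    intro q
    rw [hXiff]
    exact ⟨_, by show r ≤ r + (q : ℕ); omega, rfl⟩
  have hfm : StrictMono (fun q : Fin (k - r) => V ⟨r + (q : ℕ), by have := q.isLt; omega⟩) := by
    intro q q' h
    exact hVmono (Fin.lt_def.mpr
      (by show r + (q : ℕ) < r + (q' : ℕ); exact Nat.add_lt_add_left (Fin.lt_def.mp h) r))
  have hemb := Finset.orderEmbOfFin_unique hXcard hfs hfm
  have hxvalV : ∀ i : Fin k, xval r hkn X hXcard i = V i := by
    intro i
    rcases Nat.lt_or_ge (i : ℕ) r with h | h
    · rw [xval_lt r hkn X hXcard h]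
      have := hVlt i h
      exact Fin.ext (by show (i : ℕ) = (V i : ℕ); omega)
    · rw [xval_ge r hkn X hXcard (by omega), ← hemb]
      show V ⟨r + ((i : ℕ) - r), _⟩ = V i
      congr 1
      apply Fin.ext
      show r + ((i : ℕ) - r) = (i : ℕ)
      omega
  -- conclusion
  refine ⟨j, hj, X, hXcard, hXhi, ?_⟩
  funext p
  obtain ⟨i, hpi⟩ := hBcov p
  have hps : psi r hkn hk A hcov hn j X hXcard p = mkWord r hkn hk A hcov s X hXcard p :=
    congrArg (fun t => mkWord r hkn hk A hcov t X hXcard p) hseq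
  rw [hps, mkWord_apply r hkn hk A hcov s hs X hXcard i p hpi, hxvalV i, ← hVa i p hpi]

end RWaux

theorem rw_run_type_count (n k r : ℕ) (hn : 1 ≤ n) (A : Fin k → Finset (Fin n))
    (hne : ∀ j, (A j).Nonempty) (hcov : ∀ x : Fin n, ∃! j, x ∈ A j)
    (hr : 1 ≤ r) (hrk : r ≤ k) :
    Nat.card {a : Fin n → Fin n //
        IsRookWord a ∧ runOf a = r ∧ IsOfType a A} =
      r * (n - r - 1).choose (k - r) := by
  classical
  have hk : 0 < k := lt_of_lt_of_le hr hrk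
  have hn0 : 0 < n := hn
  have hcov' : ∀ x : Fin n, ∃! j, x ∈ A j := hcov
  have hkn : k ≤ n := by
    have hrep : ∀ j : Fin k, ∃ x : Fin n, x ∈ A j := fun j => hne j
    have hinj : Function.Injective (fun j : Fin k => (hrep j).choose) := by
      intro j j' h
      have h' : (hrep j).choose = (hrep j').choose := h
      have h1 := (hrep j).choose_spec
      have h2 := (hrep j').choose_spec
      rw [h'] at h1
      exact (hcov _).unique h1 h2
    calc k = Fintype.card (Fin k) := (Fintype.card_fin k).symm
    _ ≤ Fintype.card (Fin n) := Fintype.card_le_of_injective _ hinj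
    _ = n := Fintype.card_fin n
  set S : Finset (Fin n) := Finset.univ.filter (fun x : Fin n => r < (x : ℕ)) with hSdef
  have hScard : S.card = n - (r + 1) := RWaux.card_filter_le n (r + 1)
  have hmem : ∀ X : Finset (Fin n), X ∈ S.powersetCard (k - r) →
      X.card = k - r ∧ ∀ x ∈ X, r < (x : ℕ) := by
    intro X hX
    rw [Finset.mem_powersetCard] at hX
    refine ⟨hX.2, fun x hx => ?_⟩
    have := hX.1 hx
    rw [hSdef] at this
    exact (Finset.mem_filter.mp this).2
  let Ψ : Fin r × {X : Finset (Fin n) // X ∈ S.powersetCard (k - r)} →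
      {a : Fin n → Fin n // IsRookWord a ∧ runOf a = r ∧ IsOfType a A} :=
    fun q => ⟨RWaux.psi r hkn hk A hcov hn0 (q.1 : ℕ) q.2.1 (hmem _ q.2.2).1,
      RWaux.psi_spec r hkn hk A hne hcov hn0 hr hrk (q.1 : ℕ) q.1.isLt q.2.1
        (hmem _ q.2.2).1 (hmem _ q.2.2).2⟩
  have hinj : Function.Injective Ψ := by
    intro q q' h
    have hpe : RWaux.psi r hkn hk A hcov hn0 (q.1 : ℕ) q.2.1 (hmem _ q.2.2).1
        = RWaux.psi r hkn hk A hcov hn0 (q'.1 : ℕ) q'.2.1 (hmem _ q'.2.2).1 :=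
      congrArg Subtype.val h
    have hj : (q.1 : ℕ) = (q'.1 : ℕ) := by
      have e1 := RWaux.psi_at_zero r hkn hk A hcov hn0 (q.1 : ℕ)
        (lt_of_lt_of_le q.1.isLt hrk) q.2.1 (hmem _ q.2.2).1
      have e2 := RWaux.psi_at_zero r hkn hk A hcov hn0 (q'.1 : ℕ)
        (lt_of_lt_of_le q'.1.isLt hrk) q'.2.1 (hmem _ q'.2.2).1
      have e3 := congrFun hpe ⟨0, hn0⟩
      rw [e1, e2] at e3
      rw [RWaux.xval_lt r hkn q.2.1 (hmem _ q.2.2).1 q.1.isLt,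
          RWaux.xval_lt r hkn q'.2.1 (hmem _ q'.2.2).1 q'.1.isLt] at e3
      have e4 := congrArg Fin.val e3
      exact e4
    have hX : q.2.1 = q'.2.1 := by
      have eX := RWaux.psi_extract r hkn hk A hne hcov hn0 (q.1 : ℕ) q.2.1
        (hmem _ q.2.2).1 (hmem _ q.2.2).2
      have eX' := RWaux.psi_extract r hkn hk A hne hcov hn0 (q'.1 : ℕ) q'.2.1
        (hmem _ q'.2.2).1 (hmem _ q'.2.2).2
      rw [← eX, ← eX', hpe]
    exact Prod.ext (Fin.ext hj) (Subtype.ext hX)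
  have hsurj : Function.Surjective Ψ := by
    rintro ⟨a, hrook, hrun, htype⟩
    obtain ⟨j, hj, X, hX, hXhi, heq⟩ :=
      RWaux.main_surj r hkn hk A hne hcov hn0 hr hrk a hrook hrun htype
    have hXmem : X ∈ S.powersetCard (k - r) := by
      rw [Finset.mem_powersetCard]
      refine ⟨fun x hx => ?_, hX⟩
      rw [hSdef]
      exact Finset.mem_filter.mpr ⟨Finset.mem_univ _, hXhi x hx⟩
    refine ⟨(⟨j, hj⟩, ⟨X, hXmem⟩), ?_⟩
    apply Subtype.ext
    exact heq.symm
  have e := Equiv.ofBijective Ψ ⟨hinj, hsurj⟩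
  rw [Nat.card_congr e.symm, Nat.card_prod, Nat.card_eq_fintype_card, Fintype.card_fin,
      Nat.card_eq_fintype_card, Fintype.card_coe, Finset.card_powersetCard, hScard,
      Nat.sub_sub]

end
end
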